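/- If ρ is a b-storage encoding of a distribution X (i.e., each ρ(x) is a density matrix on at most b qubits, a Hilbert space of dimension at most 2^b), then H∞(X;ρ) ≥ H∞(X) − b. -/

import Mathlib

open scoped BigOperators ComplexOrder

namespace QExt

/-- Bit strings of length `n`. -/
abbrev BS (n : ℕ) := Fin n → Bool

/-- Trace norm of a complex matrix: `Tr √(AᴴA)` (sum of singular values;
for Hermitian `A` this is the sum of the absolute values of the eigenvalues). -/
noncomputable def traceNorm {ι : Type} [Fintype ι] [DecidableEq ι]
    (A : Matrix ι ι ℂ) : ℝ :=
  (((Matrix.posSemidef_conjTranspose_mul_self A).1.eigenvectorUnitary : Matrix ι ι ℂ) *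
      Matrix.diagonal (((↑) : ℝ → ℂ) ∘ (√·) ∘ (Matrix.posSemidef_conjTranspose_mul_self A).1.eigenvalues) *
      (star (Matrix.posSemidef_conjTranspose_mul_self A).1.eigenvectorUnitary : Matrix ι ι ℂ)).trace.re

/-- Trace distance between two matrices. -/
noncomputable def traceDist {ι : Type} [Fintype ι] [DecidableEq ι]
    (A B : Matrix ι ι ℂ) : ℝ :=
  traceNorm (A - B) / 2

/-- A density matrix: positive semidefinite with trace 1. -/
def IsDensity {ι : Type} [Fintype ι] [DecidableEq ι] (ρ : Matrix ι ι ℂ) : Prop :=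
  ρ.PosSemidef ∧ ρ.trace = 1

/-- A probability distribution on a finite set. -/
def IsDist {Λ : Type} [Fintype Λ] (D : Λ → ℝ) : Prop :=
  (∀ a, 0 ≤ D a) ∧ ∑ a, D a = 1

/-- A flat distribution: uniform over its support. -/
def IsFlat {Λ : Type} [Fintype Λ] (D : Λ → ℝ) : Prop :=
  ∀ a b, D a ≠ 0 → D b ≠ 0 → D a = D b

/-- Min-entropy `H∞(D) = -log₂ max_a D(a)`. -/
noncomputable def minEntropy {Λ : Type} [Fintype Λ] (D : Λ → ℝ) : ℝ :=
  - Real.logb 2 (⨆ a, D a)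

/-- A POVM indexed by `Λ`: positive semidefinite operators summing to the identity. -/
def IsPOVM {Λ ι : Type} [Fintype Λ] [Fintype ι] [DecidableEq ι]
    (F : Λ → Matrix ι ι ℂ) : Prop :=
  (∀ x, (F x).PosSemidef) ∧ ∑ x, F x = 1

/-- Optimal probability of guessing `x ∼ X` from the encoding `ρ(x)`. -/
noncomputable def guessProb {Λ ι : Type} [Fintype Λ] [Fintype ι] [DecidableEq ι]
    (X : Λ → ℝ) (ρ : Λ → Matrix ι ι ℂ) : ℝ :=
  sSup {p : ℝ | ∃ F : Λ → Matrix ι ι ℂ,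
    IsPOVM F ∧ p = ∑ x, X x * ((F x * ρ x).trace).re}

/-- Conditional min-entropy `H∞(X;ρ) = -log₂ guessProb`. -/
noncomputable def condMinEntropy {Λ ι : Type} [Fintype Λ] [Fintype ι] [DecidableEq ι]
    (X : Λ → ℝ) (ρ : Λ → Matrix ι ι ℂ) : ℝ :=
  - Real.logb 2 (guessProb X ρ)

/-- The cq-state `U ∘ E(X,U) ∘ ρ(X)`, represented by its (subnormalized) blocks
indexed by the classical value `(y, z)`. -/
noncomputable def extState {Λ Y Z ι : Type} [Fintype Λ] [Fintype Y] [Fintype Z]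
    [DecidableEq Z] [Fintype ι] [DecidableEq ι]
    (E : Λ → Y → Z) (X : Λ → ℝ) (ρ : Λ → Matrix ι ι ℂ) :
    Y × Z → Matrix ι ι ℂ :=
  fun yz => ((Fintype.card Y : ℝ))⁻¹ • ∑ x, if E x yz.1 = yz.2 then X x • ρ x else 0

/-- The ideal state `U × ρ̄_X`: uniform classical part, average encoding. -/
noncomputable def idealState (Y Z : Type) [Fintype Y] [Fintype Z]
    {Λ ι : Type} [Fintype Λ] [Fintype ι] [DecidableEq ι]
    (X : Λ → ℝ) (ρ : Λ → Matrix ι ι ℂ) : Y × Z → Matrix ι ι ℂ :=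
  fun _ => ((Fintype.card Y * Fintype.card Z : ℝ))⁻¹ • ∑ x, X x • ρ x

/-- Trace distance between two cq states given by their blocks. -/
noncomputable def cqDist {Z ι : Type} [Fintype Z] [Fintype ι] [DecidableEq ι]
    (σ τ : Z → Matrix ι ι ℂ) : ℝ :=
  (∑ z, traceNorm (σ z - τ z)) / 2

/-- The extractor error `‖U ∘ E(X,U) ∘ ρ(X) − U × ρ̄_X‖_tr`. -/
noncomputable def extError {Λ Y Z ι : Type} [Fintype Λ] [Fintype Y] [Fintype Z]
    [DecidableEq Z] [Fintype ι] [DecidableEq ι]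
    (E : Λ → Y → Z) (X : Λ → ℝ) (ρ : Λ → Matrix ι ι ℂ) : ℝ :=
  cqDist (extState E X ρ) (idealState Y Z X ρ)

/-- Statistical (variational) distance between distributions. -/
noncomputable def statDist {Λ : Type} [Fintype Λ] (D₁ D₂ : Λ → ℝ) : ℝ :=
  (∑ a, |D₁ a - D₂ a|) / 2

/-- The output distribution `(U_d, C(X,U_d))` of a condenser. -/
noncomputable def condOut {n d n' : ℕ} (C : BS n → BS d → BS n') (X : BS n → ℝ) :
    BS d × BS n' → ℝ :=
  fun p => ((2 ^ d : ℝ))⁻¹ * ∑ x, if C x p.1 = p.2 then X x else 0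

/-- `C` is an `(n,k₁) →_ε (n',k₂)` strong condenser. -/
def IsStrongCondenser {n d n' : ℕ} (C : BS n → BS d → BS n')
    (k₁ k₂ : ℝ) (ε : ℝ) : Prop :=
  ∀ X : BS n → ℝ, IsDist X → k₁ ≤ minEntropy X →
    ∃ D' : BS d × BS n' → ℝ, IsDist D' ∧ (d : ℝ) + k₂ ≤ minEntropy D' ∧
      statDist (condOut C X) D' ≤ ε

/-- The classical pure state `|y⟩⟨y|`. -/
noncomputable def ketbra {d : ℕ} (y : BS d) : Matrix (BS d) (BS d) ℂ :=
  Matrix.of fun a b => if a = y ∧ b = y then 1 else 0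

/-- The extension `ℰ ⊗ id_N` of a linear map on matrices. -/
noncomputable def extendMap {ι κ : Type} [Fintype ι] [Fintype κ]
    (ℰ : Matrix ι ι ℂ →ₗ[ℂ] Matrix κ κ ℂ) (N : ℕ)
    (A : Matrix (ι × Fin N) (ι × Fin N) ℂ) : Matrix (κ × Fin N) (κ × Fin N) ℂ :=
  Matrix.of fun p q => ℰ (Matrix.of fun i j => A (i, p.2) (j, q.2)) p.1 q.1

/-- Completely positive trace-preserving map. -/
def IsCPTP {ι κ : Type} [Fintype ι] [Fintype κ]
    (ℰ : Matrix ι ι ℂ →ₗ[ℂ] Matrix κ κ ℂ) : Prop :=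
  (∀ (N : ℕ) (A : Matrix (ι × Fin N) (ι × Fin N) ℂ), A.PosSemidef →
      (extendMap ℰ N A).PosSemidef) ∧
  (∀ A : Matrix ι ι ℂ, (ℰ A).trace = A.trace)

section Helpers
open Matrix

lemma diag_nonneg' {n : Type} [Fintype n] [DecidableEq n] {M : Matrix n n ℂ}
    (h : M.PosSemidef) (i : n) : 0 ≤ M i i := by
  exact h.diag_nonneg

lemma trace_nonneg' {n : Type} [Fintype n] [DecidableEq n] {M : Matrix n n ℂ}
    (h : M.PosSemidef) : 0 ≤ M.trace :=
  Finset.sum_nonneg fun i _ => diag_nonneg' h i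

lemma diag_le_trace' {n : Type} [Fintype n] [DecidableEq n] {M : Matrix n n ℂ}
    (h : M.PosSemidef) (i : n) : M i i ≤ M.trace :=
  Finset.single_le_sum (fun j _ => diag_nonneg' h j) (Finset.mem_univ i)

lemma trace_mul_bounds {n : Type} [Fintype n] [DecidableEq n]
    {A B : Matrix n n ℂ} (hA : A.PosSemidef) (hB : B.PosSemidef) :
    0 ≤ (A * B).trace ∧ (A * B).trace ≤ A.trace * B.trace := by
  have hH := hA.1
  set U : Matrix n n ℂ := (hH.eigenvectorUnitary : Matrix n n ℂ) with hU
  set d : n → ℂ := RCLike.ofReal ∘ hH.eigenvalues with hd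
  have hspec : A = U * Matrix.diagonal d * star U := hH.spectral_theorem
  have hUU : U * star U = 1 := Unitary.mul_star_self_of_mem hH.eigenvectorUnitary.2
  have hUU' : star U * U = 1 := Unitary.star_mul_self_of_mem hH.eigenvectorUnitary.2
  set M : Matrix n n ℂ := star U * B * U with hM
  have hMps : M.PosSemidef := by
    have := hB.conjTranspose_mul_mul_same U
    simpa [hM, Matrix.star_eq_conjTranspose] using this
  have hMtr : M.trace = B.trace := by
    rw [hM, Matrix.trace_mul_cycle, hUU, Matrix.one_mul]
  have htr : (A * B).trace = ∑ i, d i * M i i := by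
    rw [hspec]
    rw [Matrix.mul_assoc, Matrix.mul_assoc, Matrix.trace_mul_comm,
      ← Matrix.mul_assoc,
      Matrix.mul_assoc (Matrix.diagonal d) (star U) B,
      Matrix.mul_assoc (Matrix.diagonal d) (star U * B) U, ← hM]
    simp [Matrix.trace, Matrix.diag, Matrix.diagonal_mul]
  have hdnn : ∀ i, 0 ≤ d i := fun i => by
    simpa [hd] using (RCLike.ofReal_nonneg (K := ℂ)).mpr (hA.eigenvalues_nonneg i)
  have htrA : A.trace = ∑ i, d i := by
    rw [hspec, Matrix.trace_mul_cycle, hUU', Matrix.one_mul, Matrix.trace_diagonal]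
  constructor
  · rw [htr]
    exact Finset.sum_nonneg fun i _ => mul_nonneg (hdnn i) (diag_nonneg' hMps i)
  · rw [htr, htrA, Finset.sum_mul]
    apply Finset.sum_le_sum
    intro i _
    calc d i * M i i ≤ d i * M.trace :=
          mul_le_mul_of_nonneg_left (diag_le_trace' hMps i) (hdnn i)
      _ = d i * B.trace := by rw [hMtr]

end Helpers

/-- A `b`-storage encoding reduces min-entropy by at most `b`:
`H∞(X;ρ) ≥ H∞(X) − b`. -/
theorem stmt4 {Λ : Type} [Fintype Λ] {dm b : ℕ} (hdm : dm ≤ 2 ^ b)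
    (X : Λ → ℝ) (hX : IsDist X)
    (ρ : Λ → Matrix (Fin dm) (Fin dm) ℂ) (hρ : ∀ x, IsDensity (ρ x)) :
    minEntropy X - b ≤ condMinEntropy X ρ := by
  classical
  have hne : Nonempty Λ := by
    by_contra h
    rw [not_nonempty_iff] at h
    have h2 := hX.2
    simp at h2
  obtain ⟨x₀, -, hx₀⟩ := Finset.exists_max_image (Finset.univ : Finset Λ) X
    ⟨Classical.arbitrary Λ, Finset.mem_univ _⟩
  have hx₀' : ∀ a, X a ≤ X x₀ := fun a => hx₀ a (Finset.mem_univ a)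
  have hs : (⨆ a, X a) = X x₀ :=
    le_antisymm (ciSup_le hx₀') (le_ciSup (Set.Finite.bddAbove (Set.finite_range X)) x₀)
  have hspos : 0 < X x₀ := by
    rcases lt_or_ge 0 (X x₀) with h | h
    · exact h
    · exfalso
      have hz : ∀ a, X a = 0 := fun a => le_antisymm ((hx₀' a).trans h) (hX.1 a)
      have h2 := hX.2
      simp [hz] at h2
  set S : Set ℝ := {p : ℝ | ∃ F : Λ → Matrix (Fin dm) (Fin dm) ℂ,
    IsPOVM F ∧ p = ∑ x, X x * ((F x * ρ x).trace).re} with hS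
  have hgp : guessProb X ρ = sSup S := rfl
  have hbound : ∀ p ∈ S, p ≤ (2 ^ b : ℝ) * X x₀ := by
    rintro p ⟨F, hF, rfl⟩
    have hterm : ∀ x, X x * ((F x * ρ x).trace).re ≤ X x₀ * ((F x).trace).re := by
      intro x
      obtain ⟨h0, h1⟩ := trace_mul_bounds (hF.1 x) (hρ x).1
      rw [(hρ x).2, mul_one] at h1
      have h0' : 0 ≤ ((F x * ρ x).trace).re := (Complex.le_def.mp h0).1
      have h1' : ((F x * ρ x).trace).re ≤ ((F x).trace).re := (Complex.le_def.mp h1).1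
      exact mul_le_mul (hx₀' x) h1' h0' hspos.le
    calc ∑ x, X x * ((F x * ρ x).trace).re ≤ ∑ x, X x₀ * ((F x).trace).re :=
          Finset.sum_le_sum fun x _ => hterm x
      _ = X x₀ * (∑ x, (F x).trace).re := by
          rw [← Finset.mul_sum, Complex.re_sum]
      _ = X x₀ * dm := by
          rw [← Matrix.trace_sum, hF.2]
          simp [Matrix.trace_one]
      _ ≤ X x₀ * (2 ^ b : ℝ) := by
          have : (dm : ℝ) ≤ (2 ^ b : ℝ) := by exact_mod_cast hdm
          exact mul_le_mul_of_nonneg_left this hspos.le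
      _ = (2 ^ b : ℝ) * X x₀ := mul_comm _ _
  have hmem : X x₀ ∈ S := by
    refine ⟨fun x => if x = x₀ then 1 else 0, ⟨fun x => ?_, ?_⟩, ?_⟩
    · dsimp only
      split
      · exact Matrix.PosSemidef.one
      · exact Matrix.PosSemidef.zero
    · simp
    · rw [Finset.sum_eq_single x₀]
      · simp [(hρ x₀).2]
      · intro x _ hx
        simp [hx]
      · intro h
        exact absurd (Finset.mem_univ x₀) h
  have hBdd : BddAbove S := ⟨(2 ^ b : ℝ) * X x₀, fun p hp => hbound p hp⟩
  have hgl : X x₀ ≤ guessProb X ρ := le_csSup hBdd hmem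
  have hgu : guessProb X ρ ≤ (2 ^ b : ℝ) * X x₀ := csSup_le ⟨X x₀, hmem⟩ hbound
  have hgpos : 0 < guessProb X ρ := lt_of_lt_of_le hspos hgl
  unfold minEntropy condMinEntropy
  rw [hs]
  have hlog : Real.logb 2 (guessProb X ρ) ≤ Real.logb 2 ((2 ^ b : ℝ) * X x₀) :=
    Real.logb_le_logb_of_le one_lt_two hgpos hgu
  have hsplit : Real.logb 2 ((2 ^ b : ℝ) * X x₀) = (b : ℝ) + Real.logb 2 (X x₀) := by
    rw [Real.logb_mul (by positivity) (ne_of_gt hspos), Real.logb_pow,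
      Real.logb_self_eq_one one_lt_two]
    ring
  linarith [hlog, hsplit ▸ hlog]


end QExt
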